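/- Suppose there exist placement delivery arrays P_i with parameters (K_i, F_i, Z_i, S_i) for 1 ≤ i ≤ l, where Z_i = F_i − g_i. Then there exists a placement delivery array with parameters (K, F, Z, S) where K = ∏K_i, F = ∏F_i, Z = ∏F_i − ∏g_i, and S = ∏S_i. -/

import Mathlib

/-- A `(K,F,Z,S)`-placement delivery array. -/
def IsPDA (K F Z S : ℕ) (P : Fin F → Fin K → Option ℕ) : Prop :=
  (∀ j k s, P j k = some s → 1 ≤ s ∧ s ≤ S) ∧
  (∀ s, 1 ≤ s → s ≤ S → ∃ j k, P j k = some s) ∧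
  (∀ k, (Finset.univ.filter fun j => P j k = none).card = Z) ∧
  (∀ j k k' s, P j k = some s → P j k' = some s → k = k') ∧
  (∀ j j' k s, P j k = some s → P j' k = some s → j = j') ∧
  (∀ j j' k k' s, j ≠ j' → k ≠ k' → P j k = some s → P j' k' = some s →
    P j k' = none ∧ P j' k = none)

/-- If there exist `(K_i, F_i, Z_i, S_i)`-PDAs with `Z_i = F_i - g_i` for
`1 ≤ i ≤ l`, then there exists a `(∏ K_i, ∏ F_i, ∏ F_i - ∏ g_i, ∏ S_i)`-PDA. -/
lemma pda_prod2 {K1 F1 Z1 S1 K2 F2 Z2 S2 g1 g2 : ℕ}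
    (hg1 : g1 ≤ F1) (hZ1 : Z1 = F1 - g1) (hg2 : g2 ≤ F2) (hZ2 : Z2 = F2 - g2)
    {P1 : Fin F1 → Fin K1 → Option ℕ} (h1 : IsPDA K1 F1 Z1 S1 P1)
    {P2 : Fin F2 → Fin K2 → Option ℕ} (h2 : IsPDA K2 F2 Z2 S2 P2) :
    ∃ P : Fin (F1 * F2) → Fin (K1 * K2) → Option ℕ,
      IsPDA (K1 * K2) (F1 * F2) (F1 * F2 - g1 * g2) (S1 * S2) P := by
  obtain ⟨hA1, hB1, hC1, hD1, hE1, hF1'⟩ := h1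
  obtain ⟨hA2, hB2, hC2, hD2, hE2, hF2'⟩ := h2
  set eF : Fin F1 × Fin F2 ≃ Fin (F1 * F2) := finProdFinEquiv
  set eK : Fin K1 × Fin K2 ≃ Fin (K1 * K2) := finProdFinEquiv
  set enc : ℕ → ℕ → ℕ := fun s1 s2 => (s1 - 1) * S2 + s2 with henc
  have key : ∀ a a' b b' : ℕ, a < a' → 1 ≤ b' → b ≤ S2 → a * S2 + b < a' * S2 + b' := by
    intro a a' b b' h hb' hb
    calc a * S2 + b ≤ a * S2 + S2 := by omega
    _ = (a + 1) * S2 := by ring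
    _ ≤ a' * S2 := Nat.mul_le_mul_right _ h
    _ < a' * S2 + b' := by omega
  have enc_inj : ∀ s1 s2 s1' s2', 1 ≤ s2 → s2 ≤ S2 → 1 ≤ s2' → s2' ≤ S2 →
      enc s1 s2 = enc s1' s2' → s1 - 1 = s1' - 1 ∧ s2 = s2' := by
    intro s1 s2 s1' s2' h1' h2' h3' h4' he
    simp only [henc] at he
    rcases lt_trichotomy (s1 - 1) (s1' - 1) with h | h | h
    · have := key (s1 - 1) (s1' - 1) s2 s2' h h3' h2'
      exact absurd he (Nat.ne_of_lt this)
    · rw [h] at he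
      exact ⟨h, by omega⟩
    · have := key (s1' - 1) (s1 - 1) s2' s2 h h1' h4'
      exact absurd he (Nat.ne_of_gt this)
  set P : Fin (F1 * F2) → Fin (K1 * K2) → Option ℕ := fun j k =>
    (P1 (eF.symm j).1 (eK.symm k).1).bind fun s1 =>
      (P2 (eF.symm j).2 (eK.symm k).2).map fun s2 => enc s1 s2 with hPdef
  have Psome : ∀ j k s, P j k = some s ↔
      ∃ s1 s2, P1 (eF.symm j).1 (eK.symm k).1 = some s1 ∧
        P2 (eF.symm j).2 (eK.symm k).2 = some s2 ∧ s = enc s1 s2 := by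
    intro j k s
    simp only [hPdef, Option.bind_eq_some_iff, Option.map_eq_some_iff]
    constructor
    · rintro ⟨s1, hs1, s2, hs2, rfl⟩; exact ⟨s1, s2, hs1, hs2, rfl⟩
    · rintro ⟨s1, s2, hs1, hs2, rfl⟩; exact ⟨s1, hs1, s2, hs2, rfl⟩
  have Pnone : ∀ j k, P j k = none ↔
      P1 (eF.symm j).1 (eK.symm k).1 = none ∨ P2 (eF.symm j).2 (eK.symm k).2 = none := by
    intro j k
    simp only [hPdef]
    cases P1 (eF.symm j).1 (eK.symm k).1 <;> cases P2 (eF.symm j).2 (eK.symm k).2 <;> simp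
  refine ⟨P, ?_, ?_, ?_, ?_, ?_, ?_⟩
  · -- bounds
    intro j k s hs
    rw [Psome] at hs
    obtain ⟨s1, s2, hs1, hs2, rfl⟩ := hs
    obtain ⟨h1a, h1b⟩ := hA1 _ _ _ hs1
    obtain ⟨h2a, h2b⟩ := hA2 _ _ _ hs2
    constructor
    · simp only [henc]; omega
    · calc (s1 - 1) * S2 + s2 ≤ (S1 - 1) * S2 + S2 :=
            Nat.add_le_add (Nat.mul_le_mul_right _ (by omega)) h2b
      _ = (S1 - 1 + 1) * S2 := by ring
      _ ≤ S1 * S2 := Nat.mul_le_mul_right _ (by omega)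
  · -- surjectivity
    intro s hsa hsb
    have hS2 : 0 < S2 := by
      rcases Nat.eq_zero_or_pos S2 with h | h
      · rw [h, mul_zero] at hsb; omega
      · exact h
    have hmod : (s - 1) % S2 < S2 := Nat.mod_lt _ hS2
    have hlt : s - 1 < S1 * S2 := lt_of_lt_of_le (Nat.sub_lt (by omega) one_pos) hsb
    have hdiv : (s - 1) / S2 < S1 := (Nat.div_lt_iff_lt_mul hS2).mpr hlt
    obtain ⟨j1, k1, hj1⟩ := hB1 ((s - 1) / S2 + 1)
      (Nat.succ_le_succ (Nat.zero_le _)) hdiv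
    obtain ⟨j2, k2, hj2⟩ := hB2 ((s - 1) % S2 + 1)
      (Nat.succ_le_succ (Nat.zero_le _)) hmod
    refine ⟨eF (j1, j2), eK (k1, k2), ?_⟩
    rw [Psome]
    refine ⟨(s - 1) / S2 + 1, (s - 1) % S2 + 1, ?_, ?_, ?_⟩
    · simpa [Equiv.symm_apply_apply] using hj1
    · simpa [Equiv.symm_apply_apply] using hj2
    · simp only [henc, Nat.add_sub_cancel]
      have hdm := Nat.div_add_mod (s - 1) S2
      rw [mul_comm]
      omega
  · -- column star count
    intro k
    have hcard : (Finset.univ.filter fun j : Fin (F1 * F2) => P j k = none).card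
        = (Finset.univ.filter fun p : Fin F1 × Fin F2 => P (eF p) k = none).card := by
      apply Finset.card_equiv eF.symm
      intro j
      simp [Equiv.apply_symm_apply]
    rw [hcard]
    have hset : (Finset.univ.filter fun p : Fin F1 × Fin F2 => P (eF p) k = none)
        = Finset.univ \ ((Finset.univ.filter fun j1 => ¬ P1 j1 (eK.symm k).1 = none) ×ˢ
          (Finset.univ.filter fun j2 => ¬ P2 j2 (eK.symm k).2 = none)) := by
      ext p
      simp only [Finset.mem_filter, Finset.mem_univ, true_and, Finset.mem_sdiff,
        Finset.mem_product, Pnone, Equiv.symm_apply_apply]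
      tauto
    have hn1 : (Finset.univ.filter fun j1 => ¬ P1 j1 (eK.symm k).1 = none).card = g1 := by
      have h := Finset.card_filter_add_card_filter_not
        (s := (Finset.univ : Finset (Fin F1))) (p := fun j1 => P1 j1 (eK.symm k).1 = none)
      rw [hC1] at h
      simp only [Finset.card_univ, Fintype.card_fin] at h
      omega
    have hn2 : (Finset.univ.filter fun j2 => ¬ P2 j2 (eK.symm k).2 = none).card = g2 := by
      have h := Finset.card_filter_add_card_filter_not
        (s := (Finset.univ : Finset (Fin F2))) (p := fun j2 => P2 j2 (eK.symm k).2 = none)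
      rw [hC2] at h
      simp only [Finset.card_univ, Fintype.card_fin] at h
      omega
    rw [hset, Finset.card_sdiff_of_subset (Finset.subset_univ _), Finset.card_product, hn1, hn2]
    simp [Finset.card_univ]
  · -- row uniqueness
    intro j k k' s hk hk'
    rw [Psome] at hk hk'
    obtain ⟨s1, s2, ha, hb, rfl⟩ := hk
    obtain ⟨s1', s2', ha', hb', he⟩ := hk'
    obtain ⟨hb1, hb2⟩ := hA2 _ _ _ hb
    obtain ⟨hb1', hb2'⟩ := hA2 _ _ _ hb'
    obtain ⟨heq1, heq2⟩ := enc_inj s1 s2 s1' s2' hb1 hb2 hb1' hb2' he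
    have hs1 : s1 = s1' := by
      have := (hA1 _ _ _ ha).1; have := (hA1 _ _ _ ha').1; omega
    subst hs1; subst heq2
    have e1 := hD1 _ _ _ _ ha ha'
    have e2 := hD2 _ _ _ _ hb hb'
    have : eK.symm k = eK.symm k' := Prod.ext e1 e2
    exact eK.symm.injective this
  · -- column uniqueness
    intro j j' k s hk hk'
    rw [Psome] at hk hk'
    obtain ⟨s1, s2, ha, hb, rfl⟩ := hk
    obtain ⟨s1', s2', ha', hb', he⟩ := hk'
    obtain ⟨hb1, hb2⟩ := hA2 _ _ _ hb
    obtain ⟨hb1', hb2'⟩ := hA2 _ _ _ hb'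
    obtain ⟨heq1, heq2⟩ := enc_inj s1 s2 s1' s2' hb1 hb2 hb1' hb2' he
    have hs1 : s1 = s1' := by
      have := (hA1 _ _ _ ha).1; have := (hA1 _ _ _ ha').1; omega
    subst hs1; subst heq2
    have e1 := hE1 _ _ _ _ ha ha'
    have e2 := hE2 _ _ _ _ hb hb'
    have : eF.symm j = eF.symm j' := Prod.ext e1 e2
    exact eF.symm.injective this
  · -- condition C3
    intro j j' k k' s hjj hkk hjk hj'k'
    rw [Psome] at hjk hj'k'
    obtain ⟨s1, s2, ha, hb, rfl⟩ := hjk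
    obtain ⟨s1', s2', ha', hb', he⟩ := hj'k'
    obtain ⟨hb1, hb2⟩ := hA2 _ _ _ hb
    obtain ⟨hb1', hb2'⟩ := hA2 _ _ _ hb'
    obtain ⟨heq1, heq2⟩ := enc_inj s1 s2 s1' s2' hb1 hb2 hb1' hb2' he
    have hs1 : s1 = s1' := by
      have := (hA1 _ _ _ ha).1; have := (hA1 _ _ _ ha').1; omega
    subst hs1; subst heq2
    have hpj : eF.symm j ≠ eF.symm j' := fun h => hjj (eF.symm.injective h)
    have hpk : eK.symm k ≠ eK.symm k' := fun h => hkk (eK.symm.injective h)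
    by_cases h11 : (eF.symm j).1 = (eF.symm j').1
    · -- same first row index
      have hk1 : (eK.symm k).1 = (eK.symm k').1 := by
        apply hD1 _ _ _ _ ha
        rw [h11] at ha ⊢; exact ha'
      have hj2 : (eF.symm j).2 ≠ (eF.symm j').2 := fun h => hpj (Prod.ext h11 h)
      have hk2 : (eK.symm k).2 ≠ (eK.symm k').2 := fun h => hpk (Prod.ext hk1 h)
      obtain ⟨hx, hy⟩ := hF2' _ _ _ _ _ hj2 hk2 hb hb'
      constructor
      · rw [Pnone]; right; exact hx
      · rw [Pnone]; right; exact hy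
    · by_cases h21 : (eK.symm k).1 = (eK.symm k').1
      · exfalso
        apply h11
        apply hE1 _ _ _ _ ha
        rw [← h21] at ha'; exact ha'
      · obtain ⟨hx, hy⟩ := hF1' _ _ _ _ _ h11 h21 ha ha'
        constructor
        · rw [Pnone]; left; exact hx
        · rw [Pnone]; left; exact hy

lemma pda_cast {K F Z S K' F' Z' S' : ℕ} (hK : K = K') (hF : F = F')
    (hZ : Z = Z') (hS : S = S') (h : ∃ P : Fin F → Fin K → Option ℕ, IsPDA K F Z S P) :
    ∃ P : Fin F' → Fin K' → Option ℕ, IsPDA K' F' Z' S' P := by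
  subst hK; subst hF; subst hZ; subst hS; exact h

lemma pda_one : ∃ P : Fin 1 → Fin 1 → Option ℕ, IsPDA 1 1 0 1 P := by
  refine ⟨fun _ _ => some 1, ?_, ?_, ?_, ?_, ?_, ?_⟩
  · intro j k s h
    simp only [Option.some.injEq] at h
    omega
  · intro s h1 h2
    have : s = 1 := by omega
    subst this
    exact ⟨0, 0, rfl⟩
  · intro k; simp
  · intro j k k' s _ _; exact Subsingleton.elim k k'
  · intro j j' k s _ _; exact Subsingleton.elim j j'
  · intro j j' k k' s hj _ _ _
    exact absurd (Subsingleton.elim j j') hj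

theorem pda_product {l : ℕ} (K F Z S g : Fin l → ℕ)
    (hg : ∀ i, g i ≤ F i) (hZ : ∀ i, Z i = F i - g i)
    (hP : ∀ i, ∃ P : Fin (F i) → Fin (K i) → Option ℕ,
      IsPDA (K i) (F i) (Z i) (S i) P) :
    ∃ P : Fin (∏ i, F i) → Fin (∏ i, K i) → Option ℕ,
      IsPDA (∏ i, K i) (∏ i, F i) ((∏ i, F i) - ∏ i, g i) (∏ i, S i) P := by
  induction l with
  | zero =>
    exact pda_cast (by simp) (by simp) (by simp) (by simp) pda_one
  | succ n ih =>
    obtain ⟨P0, h0⟩ := hP 0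
    obtain ⟨Pt, ht⟩ := ih (fun i => K i.succ) (fun i => F i.succ) (fun i => Z i.succ)
      (fun i => S i.succ) (fun i => g i.succ)
      (fun i => hg i.succ) (fun i => hZ i.succ) (fun i => hP i.succ)
    have hgF : (∏ i : Fin n, g i.succ) ≤ ∏ i : Fin n, F i.succ :=
      Finset.prod_le_prod' fun i _ => hg i.succ
    exact pda_cast (Fin.prod_univ_succ K).symm (Fin.prod_univ_succ F).symm
      (by rw [Fin.prod_univ_succ F, Fin.prod_univ_succ g])
      (Fin.prod_univ_succ S).symm
      (pda_prod2 (hg 0) (hZ 0) hgF rfl h0 ht)
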